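/- Uniqueness of the work POVM (key step in the no-go Theorem 1): let {|k⟩}_{k=1..n} be an orthonormal basis of ℂⁿ, U a unitary matrix, and {|j⟩}_{j=1..n} an orthonormal basis. Suppose {M_{ij}}_{i,j=1..n} is a family of positive semidefinite n×n matrices such that for every density matrix ρ that is diagonal in the basis {|k⟩} one has tr(ρ M_{ij}) = ⟨i|ρ|i⟩ · |⟨j|U|i⟩|² for all i, j. Then necessarily M_{ij} = |⟨j|U|i⟩|² · |i⟩⟨i| for all i, j, i.e. the only POVM reproducing the two-point-measurement statistics on all classical states is the two-point-measurement POVM itself. -/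

import Mathlib

open Matrix
open scoped ComplexOrder

/-- The rank-one outer product `|v⟩⟨v|`. -/
def outer {n : ℕ} (v : Fin n → ℂ) : Matrix (Fin n) (Fin n) ℂ :=
  Matrix.vecMulVec v (star v)

lemma outer_psd {n : ℕ} (x : Fin n → ℂ) : (outer x).PosSemidef := by
  have : outer x = replicateCol (Fin 1) x * (replicateCol (Fin 1) x)ᴴ := by
    ext a b
    simp [outer, vecMulVec, mul_apply, conjTranspose_apply, replicateCol]
  rw [this]
  exact posSemidef_self_mul_conjTranspose _

lemma trace_outer_mul {n : ℕ} (x : Fin n → ℂ) (A : Matrix (Fin n) (Fin n) ℂ) :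
    (outer x * A).trace = star x ⬝ᵥ A *ᵥ x := by
  simp only [outer, trace, diag, mul_apply, vecMulVec_apply, dotProduct, mulVec,
    Pi.star_apply]
  rw [Finset.sum_comm]
  apply Finset.sum_congr rfl; intro b _
  rw [Finset.mul_sum]
  apply Finset.sum_congr rfl; intro a _
  ring

lemma outer_mulVec {n : ℕ} (x y : Fin n → ℂ) :
    outer x *ᵥ y = (star x ⬝ᵥ y) • x := by
  ext a
  simp [outer, vecMulVec, mulVec, dotProduct, Finset.mul_sum]
  rw [Finset.sum_mul]
  apply Finset.sum_congr rfl; intro b _; ring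

lemma trace_outer {n : ℕ} (x : Fin n → ℂ) : (outer x).trace = star x ⬝ᵥ x := by
  simp [outer, trace, diag, vecMulVec, dotProduct, mul_comm]

lemma mul_outer {n : ℕ} (A : Matrix (Fin n) (Fin n) ℂ) (x : Fin n → ℂ) :
    A * outer x = vecMulVec (A *ᵥ x) (star x) := by
  ext a b
  simp only [outer, mul_apply, vecMulVec_apply, mulVec, dotProduct, Pi.star_apply,
    Finset.sum_mul]
  apply Finset.sum_congr rfl; intro c _; ring

lemma outer_mul_vecMulVec {n : ℕ} (x y : Fin n → ℂ) :
    outer x * vecMulVec y (star x) = (star x ⬝ᵥ y) • outer x := by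
  ext a b
  simp only [outer, mul_apply, vecMulVec_apply, Matrix.smul_apply, dotProduct, Pi.star_apply,
    smul_eq_mul, Finset.sum_mul, Finset.mul_sum]
  apply Finset.sum_congr rfl; intro c _; ring

/-- uniqueness of the work POVM. Let `{|k⟩}` be an orthonormal basis
of `ℂⁿ`, `U` unitary and `{|j⟩}` an orthonormal basis. If `{M_{ij}}` is a family of
positive semidefinite matrices such that `tr(ρ M_{ij}) = ⟨i|ρ|i⟩ · |⟨j|U|i⟩|²` for every
density matrix `ρ` diagonal in the basis `{|k⟩}`, then
`M_{ij} = |⟨j|U|i⟩|² · |i⟩⟨i|` for all `i`, `j`. -/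
theorem work_povm_uniqueness
    (n : ℕ) (v w : Fin n → (Fin n → ℂ))
    (hv : ∀ k l, star (v k) ⬝ᵥ v l = if k = l then 1 else 0)
    (hw : ∀ k l, star (w k) ⬝ᵥ w l = if k = l then 1 else 0)
    (U : Matrix (Fin n) (Fin n) ℂ) (hU : Uᴴ * U = 1)
    (M : Fin n → Fin n → Matrix (Fin n) (Fin n) ℂ)
    (hM : ∀ i j, (M i j).PosSemidef)
    (hstat : ∀ ρ : Matrix (Fin n) (Fin n) ℂ, ρ.PosSemidef → ρ.trace = 1 →
      (∃ p : Fin n → ℝ, ρ = ∑ k, (p k : ℂ) • outer (v k)) →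
      ∀ i j, Matrix.trace (ρ * M i j)
        = (star (v i) ⬝ᵥ (ρ *ᵥ v i))
            * ((‖star (w j) ⬝ᵥ (U *ᵥ v i)‖ ^ 2 : ℝ) : ℂ))
    (i j : Fin n) :
    M i j = ((‖star (w j) ⬝ᵥ (U *ᵥ v i)‖ ^ 2 : ℝ) : ℂ) • outer (v i) := by
  set c : ℂ := ((‖star (w j) ⬝ᵥ (U *ᵥ v i)‖ ^ 2 : ℝ) : ℂ) with hc
  -- key statistics for each basis outer projector
  have key : ∀ k, star (v k) ⬝ᵥ (M i j) *ᵥ v k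
      = (if i = k then (1:ℂ) else 0) * (if k = i then (1:ℂ) else 0) * c := by
    intro k
    have hdiag : ∃ p : Fin n → ℝ, outer (v k) = ∑ l, (p l : ℂ) • outer (v l) := by
      refine ⟨fun l => if l = k then 1 else 0, ?_⟩
      simp [apply_ite (fun r : ℝ => (r : ℂ)), ite_smul]
    have h := hstat (outer (v k)) (outer_psd (v k))
      (by rw [trace_outer]; simpa using hv k k) hdiag i j
    rw [trace_outer_mul] at h
    rw [h, outer_mulVec]
    rw [dotProduct_smul, smul_eq_mul, hv i k, hv k i]
    ring
  have hzero : ∀ k, k ≠ i → (M i j) *ᵥ v k = 0 := by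
    intro k hk
    have := key k
    rw [if_neg (fun h => hk h.symm), if_neg hk] at this
    simp only [mul_zero, zero_mul] at this
    exact ((hM i j).dotProduct_mulVec_zero_iff (v k)).mp this
  have hval : star (v i) ⬝ᵥ (M i j) *ᵥ v i = c := by
    have := key i
    simpa using this
  -- completeness of the basis
  have hsum : (∑ k, outer (v k)) = 1 := by
    set A : Matrix (Fin n) (Fin n) ℂ := Matrix.of fun a k => v k a with hA
    have h1 : Aᴴ * A = 1 := by
      ext k l
      simpa [mul_apply, conjTranspose_apply, dotProduct, A, one_apply] using hv k l
    have h2 : A * Aᴴ = 1 := mul_eq_one_comm.mp h1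
    ext a b
    rw [← h2]
    simp [outer, vecMulVec_apply, mul_apply, conjTranspose_apply, Matrix.sum_apply, A]
  have hright : M i j * outer (v i) = M i j := by
    conv_rhs => rw [← Matrix.mul_one (M i j), ← hsum, Finset.mul_sum]
    refine (Finset.sum_eq_single (f := fun k => M i j * outer (v k)) i (fun k _ hk => ?_) (fun h => absurd (Finset.mem_univ i) h)).symm
    show M i j * outer (v k) = 0
    rw [mul_outer, hzero k hk]
    ext a b; simp [vecMulVec_apply]
  have houterherm : ∀ k, (outer (v k))ᴴ = outer (v k) := fun k => (outer_psd (v k)).1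
  have hleft : outer (v i) * M i j = M i j := by
    conv_rhs => rw [← Matrix.one_mul (M i j), ← hsum, Finset.sum_mul]
    refine (Finset.sum_eq_single (f := fun k => outer (v k) * M i j) i (fun k _ hk => ?_) (fun h => absurd (Finset.mem_univ i) h)).symm
    show outer (v k) * M i j = 0
    have hct : outer (v k) * M i j = (M i j * outer (v k))ᴴ := by
      rw [conjTranspose_mul, houterherm, (hM i j).1]
    rw [hct, mul_outer, hzero k hk]
    ext a b; simp [vecMulVec_apply]
  calc M i j = outer (v i) * M i j := hleft.symm
    _ = outer (v i) * (M i j * outer (v i)) := by rw [hright]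
    _ = outer (v i) * vecMulVec ((M i j) *ᵥ v i) (star (v i)) := by rw [mul_outer]
    _ = (star (v i) ⬝ᵥ (M i j) *ᵥ v i) • outer (v i) := outer_mul_vecMulVec _ _
    _ = c • outer (v i) := by rw [hval]
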